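/- arXiv:0810.3422 — 3 statements merged into one kernel-verified Lean document; each statement's English description precedes it below -/
import Mathlib

section
/- Fix an integer q ≥ 3. For each input length K let N = qK, and for weights 1 ≤ w ≤ K, 1 ≤ d ≤ N define E(A_{d,w}) = C(K,w) · C(d-1, ⌈qw/2⌉-1) · C(N-d, ⌊qw/2⌋) / C(N, qw) (and 0 when the binomial constraints fail). Then for any ε > 0 there exists N₀ such that for all N ≥ N₀, the cumulative sum ∑_{w=1}^{K} ∑_{d=1}^{⌊N^{(q-2)/q - ε}⌋} E(A_{d,w}) < 1. -/
section RAauxA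
open Finset

lemma choose_le_two_pow' (n k : ℕ) : n.choose k ≤ 2 ^ n := by
  rcases le_or_gt k n with h | h
  · calc n.choose k ≤ ∑ m ∈ range (n+1), n.choose m :=
        Finset.single_le_sum (f := fun m => n.choose m) (fun i _ => Nat.zero_le _)
          (mem_range.mpr (Nat.lt_succ_of_le h))
      _ = 2 ^ n := Nat.sum_range_choose n
  · simp [Nat.choose_eq_zero_of_lt h]

lemma factorial_le_four_pow (m : ℕ) :
    m.factorial ≤ 4 ^ m * (((m + 1) / 2 - 1).factorial * (m / 2).factorial) := by
  set h' := (m + 1) / 2 - 1 with hh'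
  set f := m / 2 with hf
  have h1 : h' ≤ m := by omega
  rcases Nat.eq_zero_or_pos m with rfl | hm
  · simp [hh', hf]
  have h2 : m - h' = f + 1 := by omega
  have key : m.choose h' * h'.factorial * (m - h').factorial = m.factorial :=
    Nat.choose_mul_factorial_mul_factorial h1
  have c1 : m.choose h' ≤ 2 ^ m := choose_le_two_pow' m h'
  have c3 : f + 1 ≤ 2 ^ m := by
    have := @Nat.lt_two_pow_self m
    omega
  calc m.factorial = m.choose h' * h'.factorial * ((f + 1) * f.factorial) := by
        rw [← key, h2, Nat.factorial_succ]
    _ ≤ 2 ^ m * h'.factorial * (2 ^ m * f.factorial) := by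
        exact Nat.mul_le_mul (Nat.mul_le_mul_right _ c1) (Nat.mul_le_mul_right _ c3)
    _ = (2 ^ m * 2 ^ m) * (h'.factorial * f.factorial) := by ring
    _ = 4 ^ m * (h'.factorial * f.factorial) := by
        rw [← Nat.mul_pow]

/-- Core counting inequality, entirely in `ℕ`. -/
lemma RA_core (q K d w D : ℕ) (hq : 3 ≤ q) (hw : 1 ≤ w) (hdD : d ≤ D)
    (hm : 2 * (q * w) ≤ q * K) :
    K.choose w * ((d - 1).choose ((q * w + 1) / 2 - 1) * (q * K - d).choose (q * w / 2))
        * (q * K) ^ ((q * w + 1) / 2)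
      ≤ 8 ^ (q * w) * K ^ w * D ^ ((q * w + 1) / 2 - 1) * (q * K).choose (q * w) := by
  set m := q * w with hm'
  set N := q * K with hN'
  set h1 := (m + 1) / 2 with hh1
  set h' := h1 - 1 with hh'
  set f := m / 2 with hf
  have hm1 : 1 ≤ m := Nat.mul_pos (by omega) hw
  have hfh : f + h1 = m := by omega
  have hmN : m ≤ N := by omega
  have n1 : h'.factorial * ((d - 1).choose h') ≤ D ^ h' := by
    calc h'.factorial * ((d - 1).choose h') = (d - 1).descFactorial h' :=
          (Nat.descFactorial_eq_factorial_mul_choose _ _).symm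
      _ ≤ (d - 1) ^ h' := Nat.descFactorial_le_pow _ _
      _ ≤ D ^ h' := Nat.pow_le_pow_left (by omega) _
  have n2 : f.factorial * ((N - d).choose f) ≤ N ^ f := by
    calc f.factorial * ((N - d).choose f) = (N - d).descFactorial f :=
          (Nat.descFactorial_eq_factorial_mul_choose _ _).symm
      _ ≤ (N - d) ^ f := Nat.descFactorial_le_pow _ _
      _ ≤ N ^ f := Nat.pow_le_pow_left (by omega) _
  have n3 : K.choose w ≤ K ^ w := Nat.choose_le_pow K w
  have n4 : N ^ m ≤ 2 ^ m * (m.factorial * N.choose m) := by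
    have d1 : (N + 1 - m) ^ m ≤ N.descFactorial m := Nat.pow_sub_le_descFactorial N m
    have d2 : N ≤ 2 * (N + 1 - m) := by omega
    calc N ^ m ≤ (2 * (N + 1 - m)) ^ m := Nat.pow_le_pow_left d2 m
      _ = 2 ^ m * (N + 1 - m) ^ m := Nat.mul_pow 2 _ m
      _ ≤ 2 ^ m * N.descFactorial m := Nat.mul_le_mul_left _ d1
      _ = 2 ^ m * (m.factorial * N.choose m) := by
          rw [Nat.descFactorial_eq_factorial_mul_choose]
  have n5 : m.factorial ≤ 4 ^ m * (h'.factorial * f.factorial) := factorial_le_four_pow m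
  have hpos : 0 < h'.factorial * f.factorial :=
    Nat.mul_pos (Nat.factorial_pos _) (Nat.factorial_pos _)
  refine Nat.le_of_mul_le_mul_left ?_ hpos
  calc (h'.factorial * f.factorial) *
        (K.choose w * ((d - 1).choose h' * (N - d).choose f) * N ^ h1)
      = K.choose w * ((h'.factorial * ((d - 1).choose h')) *
          ((f.factorial * ((N - d).choose f)))) * N ^ h1 := by ring
    _ ≤ K ^ w * (D ^ h' * N ^ f) * N ^ h1 := by
        exact Nat.mul_le_mul_right _ (Nat.mul_le_mul n3 (Nat.mul_le_mul n1 n2))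
    _ = K ^ w * D ^ h' * (N ^ f * N ^ h1) := by ring
    _ = K ^ w * D ^ h' * N ^ m := by rw [← pow_add, hfh]
    _ ≤ K ^ w * D ^ h' * (2 ^ m * (m.factorial * N.choose m)) := Nat.mul_le_mul_left _ n4
    _ ≤ K ^ w * D ^ h' * (2 ^ m * ((4 ^ m * (h'.factorial * f.factorial)) * N.choose m)) := by
        exact Nat.mul_le_mul_left _ (Nat.mul_le_mul_left _ (Nat.mul_le_mul_right _ n5))
    _ = (h'.factorial * f.factorial) * ((2 ^ m * 4 ^ m) * K ^ w * D ^ h' * N.choose m) := by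
        ring
    _ = (h'.factorial * f.factorial) * (8 ^ m * K ^ w * D ^ h' * N.choose m) := by
        rw [← Nat.mul_pow]


end RAauxA

open Finset in
/-- Ensemble-average IOWEF of the repeat-accumulate ensemble with repetition factor `q`,
block length `N = qK`: `E(A_{d,w}) = C(K,w)·C(d-1,⌈qw/2⌉-1)·C(N-d,⌊qw/2⌋)/C(N,qw)`. -/
noncomputable def RAEnum (q K d w : ℕ) : ℝ :=
  (K.choose w : ℝ) *
    ((d - 1).choose ((q * w + 1) / 2 - 1) * (q * K - d).choose (q * w / 2) : ℝ) /
    ((q * K).choose (q * w) : ℝ)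


section RAauxB
open Finset

/-- Single-term upper bound in `ℝ`. -/
lemma RA_term_le (q K d w D : ℕ) (hq : 3 ≤ q) (hw : 1 ≤ w) (hdD : d ≤ D)
    (hm : 2 * (q * w) ≤ q * K) :
    RAEnum q K d w ≤
      ((8 ^ (q * w) * K ^ w * D ^ ((q * w + 1) / 2 - 1) : ℕ) : ℝ)
        / ((q * K : ℕ) : ℝ) ^ ((q * w + 1) / 2) := by
  have hm1 : 1 ≤ q * w := Nat.mul_pos (by omega) hw
  have hNpos : (0 : ℝ) < ((q * K : ℕ) : ℝ) := by
    exact_mod_cast (by omega : 0 < q * K)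
  have hC : (0 : ℝ) < (((q * K).choose (q * w) : ℕ) : ℝ) := by
    exact_mod_cast Nat.choose_pos (by omega : q * w ≤ q * K)
  rw [RAEnum, div_le_div_iff₀ hC (by positivity)]
  have h := RA_core q K d w D hq hw hdD hm
  have h2 := (Nat.cast_le (α := ℝ)).mpr h
  push_cast at h2 ⊢
  ring_nf at h2 ⊢
  exact h2

lemma geom_half_Icc (K : ℕ) : ∑ w ∈ Icc 1 K, (1 / 2 : ℝ) ^ w = 1 - (1 / 2) ^ K := by
  induction K with
  | zero => simp
  | succ n ih =>
      rw [Finset.sum_Icc_succ_top (by omega : 1 ≤ n + 1), ih]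
      ring


end RAauxB

open Finset in
/-- For any `ε > 0` there is `N₀` such that for all block lengths `N = qK ≥ N₀`, the
expected number of codewords of weight at most `N^{(q-2)/q - ε}` is less than `1`. -/
theorem RA_cumulative_WEF_lt_one (q : ℕ) (hq : 3 ≤ q) (ε : ℝ) (hε : 0 < ε) :
    ∃ N₀ : ℕ, ∀ K : ℕ, N₀ ≤ q * K →
      ∑ w ∈ Icc 1 K,
        ∑ d ∈ Icc 1 (⌊((q * K : ℕ) : ℝ) ^ (((q : ℝ) - 2) / (q : ℝ) - ε)⌋₊),
          RAEnum q K d w < 1 := by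
  have hq0 : (0 : ℝ) < (q : ℝ) := by
    have : (3 : ℝ) ≤ (q : ℝ) := by exact_mod_cast hq
    linarith
  set α : ℝ := ((q : ℝ) - 2) / (q : ℝ) - ε with hα
  have hα1 : α - 1 < 0 := by
    have h1 : ((q : ℝ) - 2) / (q : ℝ) < 1 := by
      rw [div_lt_one hq0]; linarith
    simp only [hα]; linarith
  have hey : 0 < ε * q / 2 := by positivity
  have t1 : Filter.Tendsto (fun x : ℝ => x ^ (α - 1)) Filter.atTop (nhds 0) := by
    have h := tendsto_rpow_neg_atTop (y := 1 - α) (by linarith)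
    simpa [neg_sub] using h
  have t2 : Filter.Tendsto (fun x : ℝ => x ^ (-(ε * q / 2))) Filter.atTop (nhds 0) :=
    tendsto_rpow_neg_atTop hey
  have ev1 := t1.eventually_lt_const (show (0:ℝ) < 1/4 by norm_num)
  have ev2 := t2.eventually_lt_const (show (0:ℝ) < 1/(2*8^q) by positivity)
  obtain ⟨x₀, hx₀⟩ := Filter.eventually_atTop.mp (ev1.and ev2)
  refine ⟨max 1 (⌈x₀⌉₊ + 1), ?_⟩
  intro K hK
  set N := q * K with hN
  have hN1 : 1 ≤ N := le_trans (le_max_left _ _) hK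
  have hNx : x₀ ≤ (N : ℝ) := by
    have h1 : ⌈x₀⌉₊ + 1 ≤ N := le_trans (le_max_right _ _) hK
    have h2 : x₀ ≤ (⌈x₀⌉₊ : ℝ) := Nat.le_ceil x₀
    have h3 : ((⌈x₀⌉₊ : ℕ) : ℝ) ≤ (N : ℝ) := by exact_mod_cast (by omega : ⌈x₀⌉₊ ≤ N)
    linarith
  obtain ⟨c1, c2⟩ := hx₀ (N : ℝ) hNx
  have hNR : (1 : ℝ) ≤ (N : ℝ) := by exact_mod_cast hN1
  have hNpos : (0 : ℝ) < (N : ℝ) := by linarith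
  set D := ⌊((N : ℕ) : ℝ) ^ α⌋₊ with hD
  have hDα : (D : ℝ) ≤ (N : ℝ) ^ α := Nat.floor_le (Real.rpow_nonneg hNpos.le _)
  have hrpow_split : (N : ℝ) ^ α = (N : ℝ) ^ (α - 1) * (N : ℝ) := by
    have h := Real.rpow_add hNpos (α - 1) 1
    rw [Real.rpow_one] at h
    have h2 : α - 1 + 1 = α := by ring
    rw [h2] at h
    exact h
  have hDN4 : 4 * D ≤ N := by
    have h4 : ((4 * D : ℕ) : ℝ) ≤ (N : ℝ) := by
      push_cast
      nlinarith [hDα, c1, hNpos]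
    exact_mod_cast h4
  have hK1 : 1 ≤ K := by
    rcases Nat.eq_zero_or_pos K with hk0 | h
    · rw [hN, hk0, Nat.mul_zero] at hN1; omega
    · exact h
  have hbase : 8 ^ q * ((K : ℝ) * (((N : ℝ))⁻¹ * (N : ℝ) ^ (-(ε * q / 2)))) ≤ 1 / 2 := by
    have hKN : (K : ℝ) * ((N : ℝ))⁻¹ ≤ 1 := by
      rw [← div_eq_mul_inv, div_le_one hNpos]
      exact_mod_cast (Nat.le_mul_of_pos_left K (by omega : 0 < q) : K ≤ q * K)
    have hrn : (0 : ℝ) ≤ (N : ℝ) ^ (-(ε * q / 2)) := Real.rpow_nonneg hNpos.le _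
    have h8 : (0 : ℝ) < (8 : ℝ) ^ q := by positivity
    have step1 : (K : ℝ) * (((N : ℝ))⁻¹ * (N : ℝ) ^ (-(ε * q / 2)))
        ≤ (N : ℝ) ^ (-(ε * q / 2)) := by
      calc (K : ℝ) * (((N : ℝ))⁻¹ * (N : ℝ) ^ (-(ε * q / 2)))
          = ((K : ℝ) * ((N : ℝ))⁻¹) * (N : ℝ) ^ (-(ε * q / 2)) := by ring
        _ ≤ 1 * (N : ℝ) ^ (-(ε * q / 2)) := mul_le_mul_of_nonneg_right hKN hrn
        _ = (N : ℝ) ^ (-(ε * q / 2)) := one_mul _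
    calc (8 : ℝ) ^ q * ((K : ℝ) * (((N : ℝ))⁻¹ * (N : ℝ) ^ (-(ε * q / 2))))
        ≤ 8 ^ q * (N : ℝ) ^ (-(ε * q / 2)) := mul_le_mul_of_nonneg_left step1 h8.le
      _ ≤ 8 ^ q * (1 / (2 * 8 ^ q)) := mul_le_mul_of_nonneg_left c2.le h8.le
      _ = 1 / 2 := by
          field_simp
  -- per-w bound
  have hw_bound : ∀ w ∈ Icc 1 K, ∑ d ∈ Icc 1 D, RAEnum q K d w ≤ (1 / 2 : ℝ) ^ w := by
    intro w hwmem
    obtain ⟨hw1, hwK⟩ := mem_Icc.mp hwmem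
    by_cases hcase : (q * w + 1) / 2 ≤ D
    · -- main case
      have hm1 : 1 ≤ q * w := Nat.mul_pos (by omega) hw1
      have hmle : 2 * (q * w) ≤ N := by omega
      have hsum : ∑ d ∈ Icc 1 D, RAEnum q K d w
          ≤ (D : ℝ) * (((8 ^ (q * w) * K ^ w * D ^ ((q * w + 1) / 2 - 1) : ℕ) : ℝ)
              / ((N : ℕ) : ℝ) ^ ((q * w + 1) / 2)) := by
        calc ∑ d ∈ Icc 1 D, RAEnum q K d w
            ≤ ∑ _d ∈ Icc 1 D, (((8 ^ (q * w) * K ^ w * D ^ ((q * w + 1) / 2 - 1) : ℕ) : ℝ)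
                / ((N : ℕ) : ℝ) ^ ((q * w + 1) / 2)) := by
              refine Finset.sum_le_sum ?_
              intro d hd
              obtain ⟨hd1, hdD⟩ := mem_Icc.mp hd
              exact RA_term_le q K d w D hq hw1 hdD hmle
          _ = (D : ℝ) * (((8 ^ (q * w) * K ^ w * D ^ ((q * w + 1) / 2 - 1) : ℕ) : ℝ)
                / ((N : ℕ) : ℝ) ^ ((q * w + 1) / 2)) := by
              rw [Finset.sum_const, Nat.card_Icc]
              simp [nsmul_eq_mul]
      have hDpow : (D : ℝ) * ((8 ^ (q * w) * K ^ w * D ^ ((q * w + 1) / 2 - 1) : ℕ) : ℝ)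
          = ((8 : ℝ) ^ q) ^ w * (K : ℝ) ^ w * (D : ℝ) ^ ((q * w + 1) / 2) := by
        push_cast
        rw [← pow_mul]
        have hDD : (D : ℝ) ^ ((q * w + 1) / 2 - 1) * (D : ℝ)
            = (D : ℝ) ^ ((q * w + 1) / 2) := by
          rw [← pow_succ]
          congr 1
          omega
        calc (D : ℝ) * (8 ^ (q * w) * (K : ℝ) ^ w * (D : ℝ) ^ ((q * w + 1) / 2 - 1))
            = 8 ^ (q * w) * (K : ℝ) ^ w * ((D : ℝ) ^ ((q * w + 1) / 2 - 1) * (D : ℝ)) := by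
              ring
          _ = 8 ^ (q * w) * (K : ℝ) ^ w * (D : ℝ) ^ ((q * w + 1) / 2) := by rw [hDD]
      have hfrac : (D : ℝ) ^ ((q * w + 1) / 2) / ((N : ℕ) : ℝ) ^ ((q * w + 1) / 2)
          ≤ (((N : ℝ))⁻¹ * (N : ℝ) ^ (-(ε * q / 2))) ^ w := by
        have r1 : (D : ℝ) / (N : ℝ) ≤ (N : ℝ) ^ (α - 1) := by
          rw [div_le_iff₀ hNpos]
          calc (D : ℝ) ≤ (N : ℝ) ^ α := hDα
            _ = (N : ℝ) ^ (α - 1) * (N : ℝ) := hrpow_split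
        have r2 : ((D : ℝ) / (N : ℝ)) ^ ((q * w + 1) / 2)
            ≤ ((N : ℝ) ^ (α - 1)) ^ ((q * w + 1) / 2) :=
          pow_le_pow_left₀ (by positivity) r1 _
        have r3 : ((N : ℝ) ^ (α - 1)) ^ ((q * w + 1) / 2)
            = (N : ℝ) ^ ((α - 1) * (((q * w + 1) / 2 : ℕ) : ℝ)) := by
          rw [← Real.rpow_natCast ((N : ℝ) ^ (α - 1)) ((q * w + 1) / 2),
            ← Real.rpow_mul hNpos.le]
        have r4 : (α - 1) * (((q * w + 1) / 2 : ℕ) : ℝ)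
            ≤ (α - 1) * (((q * w : ℕ) : ℝ) / 2) := by
          have hge : ((q * w : ℕ) : ℝ) / 2 ≤ (((q * w + 1) / 2 : ℕ) : ℝ) := by
            have : (q * w) ≤ 2 * ((q * w + 1) / 2) := by omega
            have h2 : ((q * w : ℕ) : ℝ) ≤ 2 * (((q * w + 1) / 2 : ℕ) : ℝ) := by
              exact_mod_cast this
            linarith
          exact mul_le_mul_of_nonpos_left hge (le_of_lt hα1)
        have r5 : (N : ℝ) ^ ((α - 1) * (((q * w + 1) / 2 : ℕ) : ℝ))
            ≤ (N : ℝ) ^ ((α - 1) * (((q * w : ℕ) : ℝ) / 2)) :=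
          Real.rpow_le_rpow_of_exponent_le hNR r4
        have r6 : (α - 1) * (((q * w : ℕ) : ℝ) / 2) = ((-1) + -(ε * q / 2)) * (w : ℕ) := by
          push_cast
          rw [hα]
          field_simp
          ring
        have r7 : (N : ℝ) ^ (((-1) + -(ε * q / 2)) * ((w : ℕ) : ℝ))
            = (((N : ℝ))⁻¹ * (N : ℝ) ^ (-(ε * q / 2))) ^ w := by
          rw [Real.rpow_mul hNpos.le, Real.rpow_natCast]
          congr 1
          rw [Real.rpow_add hNpos, Real.rpow_neg_one]
        calc (D : ℝ) ^ ((q * w + 1) / 2) / ((N : ℕ) : ℝ) ^ ((q * w + 1) / 2)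
            = ((D : ℝ) / (N : ℝ)) ^ ((q * w + 1) / 2) := by rw [div_pow]
          _ ≤ ((N : ℝ) ^ (α - 1)) ^ ((q * w + 1) / 2) := r2
          _ = (N : ℝ) ^ ((α - 1) * (((q * w + 1) / 2 : ℕ) : ℝ)) := r3
          _ ≤ (N : ℝ) ^ ((α - 1) * (((q * w : ℕ) : ℝ) / 2)) := r5
          _ = (N : ℝ) ^ (((-1) + -(ε * q / 2)) * ((w : ℕ) : ℝ)) := by rw [r6]
          _ = (((N : ℝ))⁻¹ * (N : ℝ) ^ (-(ε * q / 2))) ^ w := r7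
      have hfinal : ∑ d ∈ Icc 1 D, RAEnum q K d w
          ≤ (8 ^ q * ((K : ℝ) * (((N : ℝ))⁻¹ * (N : ℝ) ^ (-(ε * q / 2))))) ^ w := by
        calc ∑ d ∈ Icc 1 D, RAEnum q K d w
            ≤ (D : ℝ) * (((8 ^ (q * w) * K ^ w * D ^ ((q * w + 1) / 2 - 1) : ℕ) : ℝ)
                / ((N : ℕ) : ℝ) ^ ((q * w + 1) / 2)) := hsum
          _ = ((8 : ℝ) ^ q) ^ w * (K : ℝ) ^ w *
                ((D : ℝ) ^ ((q * w + 1) / 2) / ((N : ℕ) : ℝ) ^ ((q * w + 1) / 2)) := by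
              rw [mul_div_assoc', hDpow]
              ring
          _ ≤ ((8 : ℝ) ^ q) ^ w * (K : ℝ) ^ w *
                ((((N : ℝ))⁻¹ * (N : ℝ) ^ (-(ε * q / 2))) ^ w) := by
              refine mul_le_mul_of_nonneg_left hfrac (by positivity)
          _ = (8 ^ q * ((K : ℝ) * (((N : ℝ))⁻¹ * (N : ℝ) ^ (-(ε * q / 2))))) ^ w := by
              simp only [mul_pow]
              ring
      calc ∑ d ∈ Icc 1 D, RAEnum q K d w
          ≤ (8 ^ q * ((K : ℝ) * (((N : ℝ))⁻¹ * (N : ℝ) ^ (-(ε * q / 2))))) ^ w := hfinal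
        _ ≤ (1 / 2 : ℝ) ^ w := by
            refine pow_le_pow_left₀ (by positivity) hbase w
    · -- vanishing case
      have hzero : ∑ d ∈ Icc 1 D, RAEnum q K d w = 0 := by
        refine Finset.sum_eq_zero ?_
        intro d hd
        obtain ⟨hd1, hdD⟩ := mem_Icc.mp hd
        have hlt : d - 1 < (q * w + 1) / 2 - 1 := by omega
        rw [RAEnum, Nat.choose_eq_zero_of_lt hlt]
        simp
      rw [hzero]
      positivity
  calc ∑ w ∈ Icc 1 K, ∑ d ∈ Icc 1 D, RAEnum q K d w
      ≤ ∑ w ∈ Icc 1 K, (1 / 2 : ℝ) ^ w := Finset.sum_le_sum hw_bound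
    _ = 1 - (1 / 2) ^ K := geom_half_Icc K
    _ < 1 := by
        have : (0 : ℝ) < (1 / 2) ^ K := by positivity
        linarith
end

section
/- Let H(x) = -x·ln x - (1-x)·ln(1-x) be the binary entropy function and fix 0 < ρ < 1/2. Define F_ρ(β) = β·ln 2 + H((ρ - β/2)/(1-β))·(1-β) - H(ρ) for 0 < β ≤ 2ρ. Then F_ρ(β) < 0 for all such β. -/
/-- The binary entropy function with the natural logarithm
(`Real.log 0 = 0` in Mathlib, so `H 0 = H 1 = 0`). -/
noncomputable def binH (x : ℝ) : ℝ := -x * Real.log x - (1 - x) * Real.log (1 - x)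

lemma binH_eq (x : ℝ) : binH x = Real.binEntropy x := by
  simp [binH, Real.binEntropy, Real.log_inv]; ring

/-- For `0 < ρ < 1/2` and `0 < β ≤ 2ρ`, the function
`F_ρ(β) = β·ln 2 + H((ρ-β/2)/(1-β))·(1-β) - H(ρ)` is strictly negative. -/
theorem F_rho_neg (ρ β : ℝ) (hρ0 : 0 < ρ) (hρ : ρ < 1 / 2) (hβ0 : 0 < β)
    (hβ : β ≤ 2 * ρ) :
    β * Real.log 2 + binH ((ρ - β / 2) / (1 - β)) * (1 - β) - binH ρ < 0 := by
  set x : ℝ := (ρ - β / 2) / (1 - β) with hx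
  have hβ1 : β < 1 := by linarith
  have h1β : (0:ℝ) < 1 - β := by linarith
  have hx0 : 0 ≤ x := div_nonneg (by linarith) h1β.le
  have hxhalf : x < 1 / 2 := by
    rw [hx, div_lt_iff₀ h1β]; linarith
  have hmem : x ∈ Set.Icc (0:ℝ) 1 := ⟨hx0, by linarith⟩
  have hhalf : (2:ℝ)⁻¹ ∈ Set.Icc (0:ℝ) 1 := by norm_num
  have hne : x ≠ (2:ℝ)⁻¹ := by
    intro h; rw [h] at hxhalf; norm_num at hxhalf
  have hsum : (1 - β) + β = 1 := by ring
  have hcomb : (1 - β) • x + β • (2:ℝ)⁻¹ = ρ := by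
    rw [smul_eq_mul, smul_eq_mul, hx, mul_div_cancel₀ _ h1β.ne']; ring
  have := Real.strictConcave_binEntropy.2 hmem hhalf hne h1β hβ0 hsum
  rw [hcomb, Real.binEntropy_two_inv, smul_eq_mul, smul_eq_mul] at this
  rw [binH_eq, binH_eq]
  linarith
end

section
/- For the RAA ensemble with q = 2 and any 0 < ρ̄: the ensemble-average cumulative weight enumerator satisfies E(A_{d ≤ ρ̄N}) ≥ ∑_{d=1}^{⌊ρ̄N⌋} E(A_{d, d₁=1, w=1}) = ⌊ρ̄N⌋/N, since E(A_{d,1,1}) = 1/N for every 1 ≤ d ≤ N. In particular the cumulative enumerator does not vanish as N → ∞. -/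
/-- Ensemble-average IOWEF of the RAA ensemble with `q = 2`, block length `N = 2K`:
`E(A_{d,d₁,w}) = C(K,w) · [C(d₁-1,w-1)·C(N-d₁,w)/C(N,2w)] · [C(d-1,⌈d₁/2⌉-1)·C(N-d,⌊d₁/2⌋)/C(N,d₁)]`. -/
noncomputable def RAAEnum2 (K d d₁ w : ℕ) : ℝ :=
  (K.choose w : ℝ) *
    (((d₁ - 1).choose (w - 1) * (2 * K - d₁).choose w : ℝ) / ((2 * K).choose (2 * w) : ℝ)) *
    (((d - 1).choose ((d₁ + 1) / 2 - 1) * (2 * K - d).choose (d₁ / 2) : ℝ) /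
      ((2 * K).choose d₁ : ℝ))

lemma RAAEnum2_nonneg (K d d₁ w : ℕ) : 0 ≤ RAAEnum2 K d d₁ w := by
  unfold RAAEnum2; positivity

lemma RAAEnum2_one_one (K : ℕ) (hK : 1 ≤ K) (d : ℕ) :
    RAAEnum2 K d 1 1 = 1 / (2 * K : ℝ) := by
  have h2K : (2 * K).choose 2 = K * (2 * K - 1) := by
    rw [Nat.choose_two_right]
    have : 2 * K * (2 * K - 1) = 2 * (K * (2 * K - 1)) := by ring
    rw [this, Nat.mul_div_cancel_left _ (by norm_num)]
  unfold RAAEnum2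
  norm_num [h2K]
  have hm : 1 ≤ 2 * K - 1 := by omega
  set m := 2 * K - 1 with hmdef
  have hmpos : (0 : ℝ) < m := by exact_mod_cast hm
  have hKpos : (0 : ℝ) < K := by exact_mod_cast hK
  push_cast
  field_simp

open Finset in
/-- For the RAA ensemble with `q = 2`: `E(A_{d,1,1}) = 1/N` for every `1 ≤ d ≤ N`,
hence for any `rbar > 0` the cumulative weight enumerator satisfies
`E(A_{d ≤ rbarN}) ≥ ∑_{d=1}^{⌊rbarN⌋} E(A_{d,1,1}) = ⌊rbarN⌋/N`. -/
theorem RAA_q2_cumulative_lower_bound (K : ℕ) (hK : 1 ≤ K) (rbar : ℝ) (hrbar : 0 < rbar) :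
    (∀ d ∈ Icc 1 (2 * K), RAAEnum2 K d 1 1 = 1 / (2 * K : ℝ)) ∧
    (⌊rbar * (2 * K : ℝ)⌋₊ : ℝ) / (2 * K : ℝ) ≤
      ∑ w ∈ Icc 1 K, ∑ d₁ ∈ Icc 1 (2 * K), ∑ d ∈ Icc 1 ⌊rbar * (2 * K : ℝ)⌋₊,
        RAAEnum2 K d d₁ w := by
  refine ⟨fun d _ => RAAEnum2_one_one K hK d, ?_⟩
  set M := ⌊rbar * (2 * K : ℝ)⌋₊ with hM
  have h1mem : (1 : ℕ) ∈ Icc 1 K := by simp [Finset.mem_Icc, hK]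
  have h1mem2 : (1 : ℕ) ∈ Icc 1 (2 * K) := by
    simp [Finset.mem_Icc]; omega
  have hinner : ∑ d ∈ Icc 1 M, RAAEnum2 K d 1 1 = (M : ℝ) / (2 * K : ℝ) := by
    rw [Finset.sum_congr rfl (fun d _ => RAAEnum2_one_one K hK d)]
    rw [Finset.sum_const, Nat.card_Icc]
    simp
    ring
  have step1 : ∑ d ∈ Icc 1 M, RAAEnum2 K d 1 1 ≤
      ∑ d₁ ∈ Icc 1 (2 * K), ∑ d ∈ Icc 1 M, RAAEnum2 K d d₁ 1 :=
    Finset.single_le_sum (fun i _ => Finset.sum_nonneg fun j _ => RAAEnum2_nonneg K j i 1) h1mem2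
  have step2 : ∑ d₁ ∈ Icc 1 (2 * K), ∑ d ∈ Icc 1 M, RAAEnum2 K d d₁ 1 ≤
      ∑ w ∈ Icc 1 K, ∑ d₁ ∈ Icc 1 (2 * K), ∑ d ∈ Icc 1 M, RAAEnum2 K d d₁ w :=
    Finset.single_le_sum
      (fun i _ => Finset.sum_nonneg fun j _ => Finset.sum_nonneg fun l _ => RAAEnum2_nonneg K l j i)
      h1mem
  calc (M : ℝ) / (2 * K : ℝ) = ∑ d ∈ Icc 1 M, RAAEnum2 K d 1 1 := hinner.symm
    _ ≤ _ := le_trans step1 step2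
end
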